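/- Let X, Y be real Hilbert spaces, a : X × X → ℝ and b : X × Y → ℝ bounded bilinear forms, V := { x ∈ X : b(x, y) = 0 ∀ y ∈ Y } the kernel of b. Assume a is V-elliptic (a(v,v) ≥ α‖v‖² for all v ∈ V, α > 0) and b satisfies the inf-sup condition with constant β > 0. Then for every pair of bounded linear functionals F ∈ X', G ∈ Y' the saddle point problem a(σ, τ) + b(τ, u) = F(τ) ∀τ ∈ X, b(σ, v) = G(v) ∀v ∈ Y has a unique solution (σ, u) ∈ X × Y, and ‖σ‖ + ‖u‖ ≤ C(‖F‖ + ‖G‖) with C depending only on α, β and the norms of a and b. -/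
import Mathlib
open RealInnerProductSpace InnerProductSpace ContinuousLinearMap

section aux
variable {X Y : Type*} [NormedAddCommGroup X] [InnerProductSpace ℝ X] [CompleteSpace X]
    [NormedAddCommGroup Y] [InnerProductSpace ℝ Y] [CompleteSpace Y]

omit [CompleteSpace X] [CompleteSpace Y] in
lemma exists_bad' (b : X →L[ℝ] Y →L[ℝ] ℝ) [CompleteSpace X] :
    ∃ bad : Y →L[ℝ] X, ∀ y x, ⟪bad y, x⟫_ℝ = b x y := by
  refine ⟨LinearMap.mkContinuous
    { toFun := fun y => (InnerProductSpace.toDual ℝ X).symm (b.flip y)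
      map_add' := fun y z => by simp
      map_smul' := fun c y => by simp [starRingEnd_apply] }
    ‖b.flip‖ (fun y => by simpa using b.flip.le_opNorm y), fun y x => ?_⟩
  have h := InnerProductSpace.toDual_apply_apply (𝕜 := ℝ)
    (x := (InnerProductSpace.toDual ℝ X).symm (b.flip y)) (y := x)
  rw [LinearIsometryEquiv.apply_symm_apply] at h
  simpa [LinearMap.mkContinuous] using h.symm

noncomputable def kerb (b : X →L[ℝ] Y →L[ℝ] ℝ) : Submodule ℝ X where
  carrier := {x | ∀ v, b x v = 0}
  add_mem' := fun {x} {z} hx hz v => by simp [hx v, hz v]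
  zero_mem' := fun v => by simp
  smul_mem' := fun c x hx v => by simp [hx v]

omit [CompleteSpace X] [CompleteSpace Y] in
lemma mem_kerb {b : X →L[ℝ] Y →L[ℝ] ℝ} {x : X} : x ∈ kerb b ↔ ∀ v, b x v = 0 := Iff.rfl

omit [CompleteSpace X] [CompleteSpace Y] in
lemma isClosed_kerb (b : X →L[ℝ] Y →L[ℝ] ℝ) : IsClosed ((kerb b : Submodule ℝ X) : Set X) := by
  have : ((kerb b : Submodule ℝ X) : Set X) = ⋂ v, (fun x => b x v) ⁻¹' {0} := by
    ext x; simp [mem_kerb]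
  rw [this]
  exact isClosed_iInter fun v => IsClosed.preimage (b.flip v).continuous isClosed_singleton

end aux

set_option maxHeartbeats 1000000 in
theorem stmt_14 {X Y : Type*} [NormedAddCommGroup X] [InnerProductSpace ℝ X] [CompleteSpace X]
    [NormedAddCommGroup Y] [InnerProductSpace ℝ Y] [CompleteSpace Y]
    (a : X →L[ℝ] X →L[ℝ] ℝ) (b : X →L[ℝ] Y →L[ℝ] ℝ)
    (α β : ℝ) (hα : 0 < α) (hβ : 0 < β)
    (hell : ∀ v : X, (∀ y : Y, b v y = 0) → α * ‖v‖ ^ 2 ≤ a v v)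
    (hinfsup : ∀ y : Y, β * ‖y‖ ≤ ⨆ x : {x : X // x ≠ 0}, b x.1 y / ‖x.1‖) :
    ∃ C > 0, ∀ (F : X →L[ℝ] ℝ) (G : Y →L[ℝ] ℝ),
      (∃! p : X × Y, (∀ τ : X, a p.1 τ + b τ p.2 = F τ) ∧ (∀ v : Y, b p.1 v = G v)) ∧
      (∀ p : X × Y,
        ((∀ τ : X, a p.1 τ + b τ p.2 = F τ) ∧ (∀ v : Y, b p.1 v = G v)) →
        ‖p.1‖ + ‖p.2‖ ≤ C * (‖F‖ + ‖G‖)) := by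
  obtain ⟨bad, hbad⟩ := exists_bad' b
  -- lower bound for bad
  have hlow : ∀ y : Y, β * ‖y‖ ≤ ‖bad y‖ := by
    intro y
    refine (hinfsup y).trans (Real.iSup_le (fun x => ?_) (norm_nonneg _))
    rw [div_le_iff₀ (norm_pos_iff.mpr x.2)]
    calc b x.1 y = ⟪bad y, x.1⟫_ℝ := (hbad y x.1).symm
      _ ≤ ‖bad y‖ * ‖x.1‖ := real_inner_le_norm _ _
  -- coercivity of the form t y z = ⟪bad y, bad z⟫
  have tcoer : IsCoercive (b.comp bad) := by
    refine ⟨β * β, by positivity, fun y => ?_⟩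
    have h1 : (b.comp bad) y y = ⟪bad y, bad y⟫_ℝ := (hbad y (bad y)).symm
    rw [h1, real_inner_self_eq_norm_mul_norm]
    have h2 := hlow y
    nlinarith [mul_le_mul h2 h2 (by positivity : (0:ℝ) ≤ β * ‖y‖) (norm_nonneg (bad y))]
  obtain ⟨E, hE⟩ : ∃ E : Y ≃L[ℝ] Y, ∀ y z : Y, ⟪E y, z⟫_ℝ = ⟪bad y, bad z⟫_ℝ := by
    refine ⟨tcoer.continuousLinearEquivOfBilin, fun y z => ?_⟩
    rw [tcoer.continuousLinearEquivOfBilin_apply y z]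
    calc (b.comp bad) y z = b (bad y) z := rfl
      _ = ⟪bad z, bad y⟫_ℝ := (hbad z (bad y)).symm
      _ = ⟪bad y, bad z⟫_ℝ := real_inner_comm _ _
  -- generic solver: for f ⊥ ker b there is a unique u with bad u = f
  have solve : ∀ f : X, (∀ v ∈ kerb b, ⟪f, v⟫_ℝ = 0) → ∃ u : Y, bad u = f := by
    intro f hf
    refine ⟨E.symm (ContinuousLinearMap.adjoint bad f), ?_⟩
    set u := E.symm (ContinuousLinearMap.adjoint bad f) with hu
    have h1 : ∀ z : Y, ⟪bad u, bad z⟫_ℝ = ⟪f, bad z⟫_ℝ := by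
      intro z
      rw [← hE u z, hu, E.apply_symm_apply]
      exact ContinuousLinearMap.adjoint_inner_left bad z f
    have hd : f - bad u ∈ kerb b := by
      intro z
      have h2 : ⟪bad z, f - bad u⟫_ℝ = 0 := by
        rw [real_inner_comm, inner_sub_left]; linarith [h1 z]
      exact hbad z (f - bad u) ▸ h2
    have hzero : f - bad u = 0 := by
      have h3 : ⟪f, f - bad u⟫_ℝ = 0 := hf _ hd
      have h4 : ⟪bad u, f - bad u⟫_ℝ = 0 := (hbad u (f - bad u)).trans (hd u)
      have : ⟪f - bad u, f - bad u⟫_ℝ = 0 := by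
        rw [inner_sub_left, h3, h4]; ring
      exact inner_self_eq_zero.mp this
    exact (sub_eq_zero.mp hzero).symm
  -- the ellipticity subspace
  haveI : CompleteSpace (kerb b) := (isClosed_kerb b).completeSpace_coe
  -- Riesz solve with bound
  have solve2 : ∀ f : X, (∀ v ∈ kerb b, ⟪f, v⟫_ℝ = 0) →
      ∃ u : Y, (∀ τ : X, b τ u = ⟪f, τ⟫_ℝ) ∧ β * ‖u‖ ≤ ‖f‖ := by
    intro f hf
    obtain ⟨u, hu⟩ := solve f hf
    refine ⟨u, fun τ => ?_, ?_⟩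
    · rw [← hbad u τ, hu]
    · calc β * ‖u‖ ≤ ‖bad u‖ := hlow u
        _ = ‖f‖ := by rw [hu]
  -- opaque Lax-Milgram equivalence on the kernel
  obtain ⟨Ea, hEa⟩ : ∃ Ea : (kerb b) ≃L[ℝ] (kerb b),
      ∀ v z : kerb b, ⟪Ea v, z⟫_ℝ = a v.1 z.1 := by
    set ι := (kerb b).subtypeL with hι
    set aV : (kerb b) →L[ℝ] (kerb b) →L[ℝ] ℝ := ((a.comp ι).flip.comp ι).flip with haV_def
    have haV : ∀ v w : kerb b, aV v w = a v.1 w.1 := fun v w => rfl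
    have acoer : IsCoercive aV := by
      refine ⟨α, hα, fun v => ?_⟩
      have := hell v.1 v.2
      have hn : ‖v‖ = ‖v.1‖ := rfl
      rw [haV, hn]; nlinarith
    exact ⟨acoer.continuousLinearEquivOfBilin,
      fun v z => (acoer.continuousLinearEquivOfBilin_apply v z).trans (haV v z)⟩
  have acoer' : ∀ v : kerb b, α * ‖v‖ * ‖v‖ ≤ a v.1 v.1 := by
    intro v
    have := hell v.1 v.2
    have hn : ‖v‖ = ‖v.1‖ := rfl
    rw [hn]; nlinarith
  -- step 1 : solve the constraint equation
  have step1 : ∀ G : Y →L[ℝ] ℝ, ∃ σ0 : X, (∀ v : Y, b σ0 v = G v) ∧ β * ‖σ0‖ ≤ ‖G‖ := by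
    intro G
    obtain ⟨g, hg, hgn⟩ : ∃ g : Y, (∀ v : Y, ⟪g, v⟫_ℝ = G v) ∧ ‖g‖ = ‖G‖ :=
      ⟨(InnerProductSpace.toDual ℝ Y).symm G, fun v => InnerProductSpace.toDual_symm_apply,
        LinearIsometryEquiv.norm_map _ G⟩
    refine ⟨bad (E.symm g), fun v => ?_, ?_⟩
    · calc b (bad (E.symm g)) v = ⟪bad v, bad (E.symm g)⟫_ℝ := (hbad v _).symm
        _ = ⟪bad (E.symm g), bad v⟫_ℝ := real_inner_comm _ _
        _ = ⟪E (E.symm g), v⟫_ℝ := (hE _ v).symm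
        _ = ⟪g, v⟫_ℝ := by rw [E.apply_symm_apply]
        _ = G v := hg v
    · set y1 := E.symm g with hy1
      set σ0 := bad y1 with hσ0d
      have h2 : ‖σ0‖ * ‖σ0‖ = ⟪g, y1⟫_ℝ := by
        rw [← real_inner_self_eq_norm_mul_norm]
        calc ⟪σ0, σ0⟫_ℝ = ⟪E y1, y1⟫_ℝ := (hE y1 y1).symm
          _ = ⟪g, y1⟫_ℝ := by rw [hy1, E.apply_symm_apply]
      have h3 : ⟪g, y1⟫_ℝ ≤ ‖g‖ * ‖y1‖ := real_inner_le_norm _ _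
      have h4 : β * ‖y1‖ ≤ ‖σ0‖ := hlow y1
      by_cases h : ‖σ0‖ = 0
      · rw [h, mul_zero]; exact norm_nonneg G
      · have hpos : 0 < ‖σ0‖ := lt_of_le_of_ne (norm_nonneg _) (Ne.symm h)
        rw [← hgn]
        have h5 : β * ‖σ0‖ * ‖σ0‖ ≤ ‖g‖ * ‖σ0‖ := by nlinarith [norm_nonneg g]
        exact le_of_mul_le_mul_right h5 hpos
  -- step 2 : solve the elliptic equation on the kernel
  have step2 : ∀ L : X →L[ℝ] ℝ, ∃ w : kerb b,
      (∀ τ : kerb b, a w.1 τ.1 = L τ.1) ∧ α * ‖w.1‖ ≤ ‖L‖ := by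
    intro L
    set ℓ : (kerb b) →L[ℝ] ℝ := L.comp (kerb b).subtypeL with hℓd
    have hℓap : ∀ τ : kerb b, ℓ τ = L τ.1 := fun τ => rfl
    have hℓn : ‖ℓ‖ ≤ ‖L‖ := by
      calc ‖ℓ‖ ≤ ‖L‖ * ‖(kerb b).subtypeL‖ := opNorm_comp_le _ _
        _ ≤ ‖L‖ * 1 := mul_le_mul_of_nonneg_left (Submodule.norm_subtypeL_le _) (norm_nonneg _)
        _ = ‖L‖ := mul_one _
    obtain ⟨fℓ, hfℓ⟩ : ∃ fℓ : kerb b, ∀ τ : kerb b, ⟪fℓ, τ⟫_ℝ = ℓ τ :=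
      ⟨(InnerProductSpace.toDual ℝ (kerb b)).symm ℓ,
        fun τ => InnerProductSpace.toDual_symm_apply⟩
    refine ⟨Ea.symm fℓ, fun τ => ?_, ?_⟩
    · calc a (Ea.symm fℓ).1 τ.1 = ⟪Ea (Ea.symm fℓ), τ⟫_ℝ := (hEa _ τ).symm
        _ = ⟪fℓ, τ⟫_ℝ := by rw [Ea.apply_symm_apply]
        _ = ℓ τ := hfℓ τ
        _ = L τ.1 := hℓap τ
    · set w := Ea.symm fℓ with hwd
      have hnw : ‖w.1‖ = ‖w‖ := rfl
      have h1 : α * ‖w‖ * ‖w‖ ≤ a w.1 w.1 := acoer' w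
      have h2 : a w.1 w.1 = ℓ w := by
        rw [← hEa w w, hwd, Ea.apply_symm_apply, hfℓ]
      have h3 : ℓ w ≤ ‖ℓ‖ * ‖w‖ := by
        calc ℓ w ≤ |ℓ w| := le_abs_self _
          _ = ‖ℓ w‖ := (Real.norm_eq_abs _).symm
          _ ≤ ‖ℓ‖ * ‖w‖ := ℓ.le_opNorm w
      by_cases h : ‖w‖ = 0
      · rw [hnw, h, mul_zero]; exact norm_nonneg L
      · have hpos : 0 < ‖w‖ := lt_of_le_of_ne (norm_nonneg _) (Ne.symm h)
        rw [hnw]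
        refine le_of_mul_le_mul_right ?_ hpos
        calc α * ‖w‖ * ‖w‖ ≤ ℓ w := h2 ▸ h1
          _ ≤ ‖ℓ‖ * ‖w‖ := h3
          _ ≤ ‖L‖ * ‖w‖ := mul_le_mul_of_nonneg_right hℓn (norm_nonneg _)
  -- constants
  have hM : 0 ≤ ‖a‖ := norm_nonneg a
  set M := ‖a‖ with hMd
  refine ⟨1/β + (1 + M/β)/α + (1 + M*(1/β + (1 + M/β)/α))/β, ?_, fun F G => ?_⟩
  · have h1 : 0 < 1/β := by positivity
    have h2 : 0 ≤ M/β := div_nonneg hM hβ.le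
    have h3 : 0 < (1 + M/β)/α := div_pos (by linarith) hα
    have hK : 0 < 1/β + (1 + M/β)/α := by linarith
    have h4 : 0 < (1 + M*(1/β + (1 + M/β)/α))/β :=
      div_pos (by nlinarith [mul_nonneg hM hK.le]) hβ
    linarith
  -- assemble the solution
  obtain ⟨σ0, hσ0, hσ0n⟩ := step1 G
  obtain ⟨w, hwa, hwn⟩ := step2 (F - a σ0)
  have hwa' : ∀ τ : kerb b, a w.1 τ.1 = F τ.1 - a σ0 τ.1 := by
    intro τ
    rw [hwa τ]
    simp
  have hwn' : α * ‖w.1‖ ≤ ‖F‖ + M * ‖σ0‖ := by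
    refine hwn.trans ?_
    calc ‖F - a σ0‖ ≤ ‖F‖ + ‖a σ0‖ := norm_sub_le _ _
      _ ≤ ‖F‖ + M * ‖σ0‖ := by linarith [a.le_opNorm σ0]
  set σ := σ0 + w.1 with hσd
  have hσG : ∀ v : Y, b σ v = G v := by
    intro v
    have hw0 : b w.1 v = 0 := w.2 v
    rw [hσd, map_add, ContinuousLinearMap.add_apply, hσ0 v, hw0, add_zero]
  have hσn : ‖σ‖ ≤ ‖σ0‖ + ‖w.1‖ := norm_add_le _ _
  obtain ⟨f, hfap, hfn⟩ : ∃ f : X, (∀ x : X, ⟪f, x⟫_ℝ = F x - a σ x) ∧ ‖f‖ = ‖F - a σ‖ :=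
    ⟨(InnerProductSpace.toDual ℝ X).symm (F - a σ),
      fun x => InnerProductSpace.toDual_symm_apply, LinearIsometryEquiv.norm_map _ _⟩
  have hforth : ∀ v ∈ kerb b, ⟪f, v⟫_ℝ = 0 := by
    intro v hv
    rw [hfap v]
    have h1 : a σ v = a σ0 v + a w.1 v := by
      rw [hσd, map_add, ContinuousLinearMap.add_apply]
    have h2 := hwa' ⟨v, hv⟩
    simp only at h2
    rw [h1, h2]; ring
  obtain ⟨u, hbτu, hun⟩ := solve2 f hforth
  have hsol1 : ∀ τ : X, a σ τ + b τ u = F τ := by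
    intro τ
    rw [hbτu τ, hfap τ]; ring
  have hun' : β * ‖u‖ ≤ ‖F‖ + M * ‖σ‖ := by
    refine hun.trans ?_
    rw [hfn]
    calc ‖F - a σ‖ ≤ ‖F‖ + ‖a σ‖ := norm_sub_le _ _
      _ ≤ ‖F‖ + M * ‖σ‖ := by linarith [a.le_opNorm σ]
  -- uniqueness
  have uniq : ∀ p : X × Y,
      ((∀ τ : X, a p.1 τ + b τ p.2 = F τ) ∧ (∀ v : Y, b p.1 v = G v)) → p = (σ, u) := by
    rintro ⟨p1, p2⟩ ⟨hp1, hp2⟩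
    have hbd1 : ∀ v : Y, b (p1 - σ) v = 0 := by
      intro v
      rw [map_sub, ContinuousLinearMap.sub_apply, hp2 v, hσG v, sub_self]
    have heq : ∀ τ : X, a (p1 - σ) τ + b τ (p2 - u) = 0 := by
      intro τ
      rw [map_sub, ContinuousLinearMap.sub_apply, map_sub]
      have e1 := hp1 τ
      have e2 := hsol1 τ
      linarith
    have hd1 : p1 - σ = 0 := by
      have h1 := heq (p1 - σ)
      have h2 : b (p1 - σ) (p2 - u) = 0 := hbd1 _
      have h3 : a (p1 - σ) (p1 - σ) = 0 := by linarith
      have h4 := hell (p1 - σ) hbd1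
      have h6 : ‖p1 - σ‖ ^ 2 ≤ 0 := by nlinarith
      have h5 : ‖p1 - σ‖ ^ 2 = 0 := le_antisymm h6 (sq_nonneg _)
      exact norm_eq_zero.mp (pow_eq_zero_iff two_ne_zero |>.mp h5)
    have hd2 : p2 - u = 0 := by
      have h1 : ∀ τ : X, b τ (p2 - u) = 0 := by
        intro τ
        have := heq τ
        rw [hd1, map_zero, ContinuousLinearMap.zero_apply] at this
        linarith
      have h2 : bad (p2 - u) = 0 := by
        have h3 : ⟪bad (p2 - u), bad (p2 - u)⟫_ℝ = 0 := by
          rw [hbad (p2 - u) (bad (p2 - u))]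
          exact h1 _
        exact inner_self_eq_zero.mp h3
      have h4 := hlow (p2 - u)
      rw [h2, norm_zero] at h4
      have h5 : ‖p2 - u‖ = 0 :=
        le_antisymm (nonpos_of_mul_nonpos_right (by linarith) hβ) (norm_nonneg _)
      exact norm_eq_zero.mp h5
    have e1 : p1 = σ := sub_eq_zero.mp hd1
    have e2 : p2 = u := sub_eq_zero.mp hd2
    rw [e1, e2]
  -- the norm bound
  set S := ‖F‖ + ‖G‖ with hSd
  have hSF : ‖F‖ ≤ S := by rw [hSd]; linarith [norm_nonneg G]
  have hSG : ‖G‖ ≤ S := by rw [hSd]; linarith [norm_nonneg F]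
  have hA : ‖σ0‖ ≤ S/β := by
    rw [le_div_iff₀ hβ]
    calc ‖σ0‖ * β = β * ‖σ0‖ := mul_comm _ _
      _ ≤ ‖G‖ := hσ0n
      _ ≤ S := hSG
  have hB : ‖w.1‖ ≤ (S + M*(S/β))/α := by
    rw [le_div_iff₀ hα]
    have h1 : M * ‖σ0‖ ≤ M * (S/β) := mul_le_mul_of_nonneg_left hA hM
    calc ‖w.1‖ * α = α * ‖w.1‖ := mul_comm _ _
      _ ≤ ‖F‖ + M * ‖σ0‖ := hwn'
      _ ≤ S + M*(S/β) := by linarith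
  have hCσ : ‖σ‖ ≤ S/β + (S + M*(S/β))/α := by linarith
  have hDu : ‖u‖ ≤ (S + M*(S/β + (S + M*(S/β))/α))/β := by
    rw [le_div_iff₀ hβ]
    have h1 : M * ‖σ‖ ≤ M * (S/β + (S + M*(S/β))/α) := mul_le_mul_of_nonneg_left hCσ hM
    calc ‖u‖ * β = β * ‖u‖ := mul_comm _ _
      _ ≤ ‖F‖ + M * ‖σ‖ := hun'
      _ ≤ S + M*(S/β + (S + M*(S/β))/α) := by linarith
  have hbound : ‖σ‖ + ‖u‖ ≤ (1/β + (1 + M/β)/α + (1 + M*(1/β + (1 + M/β)/α))/β) * S := by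
    have hid : (1/β + (1 + M/β)/α + (1 + M*(1/β + (1 + M/β)/α))/β) * S
        = S/β + (S + M*(S/β))/α + (S + M*(S/β + (S + M*(S/β))/α))/β := by ring
    rw [hid]; linarith
  refine ⟨⟨(σ, u), ⟨hsol1, hσG⟩, fun p hp => uniq p hp⟩, fun p hp => ?_⟩
  rw [uniq p hp]
  exact hbound
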